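/- Let n ≥ 3 be an odd integer and m ≥ 4 an even integer. Then the corona graph P_n ∘ C_m admits an edge labeling f* : E(P_n ∘ C_m) → {0,1} whose induced vertex labeling f satisfies e_f(0) = (2nm + n − 3)/2, e_f(1) = (2nm + n + 1)/2, v_f(0) = (n + nm + 1)/2, and v_f(1) = (n + nm − 1)/2. In particular |(v_f(0) + e_f(0)) − (v_f(1) + e_f(1))| ≤ 1, so P_n ∘ C_m is total edge product cordial for odd n ≥ 3 and even m ≥ 4. -/

import Mathlib

open scoped Classical
open Finset SimpleGraph

/-- Adjacency relation of the corona product `G ∘ H`: take one copy of `G` and,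
for each vertex `i` of `G`, a copy of `H` (indexed by `i`), joining `i` to every
vertex of its copy of `H`. -/
def coronaAdj {α β : Type*} (G : SimpleGraph α) (H : SimpleGraph β) :
    α ⊕ α × β → α ⊕ α × β → Prop
  | Sum.inl u, Sum.inl v => G.Adj u v
  | Sum.inl u, Sum.inr (i, _) => u = i
  | Sum.inr (i, _), Sum.inl u => u = i
  | Sum.inr (i, x), Sum.inr (j, y) => i = j ∧ H.Adj x y

/-- The corona product `G ∘ H` of two simple graphs. -/
def corona {α β : Type*} (G : SimpleGraph α) (H : SimpleGraph β) :
    SimpleGraph (α ⊕ α × β) where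
  Adj := coronaAdj G H
  symm := ⟨by
    rintro (u | ⟨i, x⟩) (v | ⟨j, y⟩) h <;>
      simp only [coronaAdj] at h ⊢
    · exact h.symm
    · exact h
    · exact h
    · exact ⟨h.1.symm, h.2.symm⟩⟩
  loopless := ⟨by
    rintro (u | ⟨i, x⟩) h <;> simp only [coronaAdj] at h
    · exact G.irrefl h
    · exact H.irrefl h.2⟩

/-- The vertex labeling induced by an edge labeling `f`: the label of `v` is the
product of the labels of the edges incident to `v` (an empty product is `1`). -/
noncomputable def inducedLabel {α : Type*} [Fintype α] (G : SimpleGraph α)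
    (f : Sym2 α → ℕ) (v : α) : ℕ :=
  ∏ u ∈ Finset.univ.filter (fun u => G.Adj v u), f s(v, u)

/-- `eCount G f i` is the number of edges of `G` labeled `i` by `f`. -/
noncomputable def eCount {α : Type*} [Fintype α] (G : SimpleGraph α)
    (f : Sym2 α → ℕ) (i : ℕ) : ℕ :=
  (G.edgeFinset.filter (fun e => f e = i)).card

/-- `vCount G f i` is the number of vertices of `G` whose induced label is `i`. -/
noncomputable def vCount {α : Type*} [Fintype α] (G : SimpleGraph α)
    (f : Sym2 α → ℕ) (i : ℕ) : ℕ :=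
  (Finset.univ.filter (fun v => inducedLabel G f v = i)).card

/-- `f` is a total edge product cordial labeling of `G`: it labels every edge `0` or `1`,
and `|(v_f(0) + e_f(0)) - (v_f(1) + e_f(1))| ≤ 1`. -/
def IsTotalEdgeProductCordialLabeling {α : Type*} [Fintype α] (G : SimpleGraph α)
    (f : Sym2 α → ℕ) : Prop :=
  (∀ e ∈ G.edgeSet, f e = 0 ∨ f e = 1) ∧
  |((vCount G f 0 : ℤ) + (eCount G f 0 : ℤ)) - ((vCount G f 1 : ℤ) + (eCount G f 1 : ℤ))| ≤ 1

/-- `G` is total edge product cordial if it admits a total edge product cordial labeling. -/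
def IsTotalEdgeProductCordial {α : Type*} [Fintype α] (G : SimpleGraph α) : Prop :=
  ∃ f : Sym2 α → ℕ, IsTotalEdgeProductCordialLabeling G f

set_option maxRecDepth 8000
set_option maxHeartbeats 1000000

/-- Classical cardinality of a predicate over a fintype. -/
noncomputable def cnt {α : Type*} [Fintype α] (p : α → Prop) : ℕ :=
  ((Finset.univ : Finset α).filter (fun a => p a)).card

lemma cnt_eq_card {α : Type*} [Fintype α] (p : α → Prop) [inst : DecidablePred p] :
    cnt p = ((Finset.univ : Finset α).filter p).card :=
  congrArg Finset.card
    (@Finset.filter_congr _ _ _ (fun a => Classical.propDecidable _) inst _ (fun _ _ => Iff.rfl))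

lemma cnt_congr {α : Type*} [Fintype α] {p q : α → Prop} (h : ∀ a, p a ↔ q a) :
    cnt p = cnt q :=
  congrArg Finset.card (Finset.filter_congr (fun a _ => h a))

lemma cnt_true {α : Type*} [Fintype α] : cnt (fun _ : α => True) = Fintype.card α := by
  unfold cnt
  simp

lemma cnt_false {α : Type*} [Fintype α] : cnt (fun _ : α => False) = 0 := by
  unfold cnt
  simp

lemma cnt_val_lt (n K : ℕ) (h : K ≤ n) :
    cnt (fun i : Fin n => i.val < K) = K := by
  rw [cnt_eq_card]
  have : ((univ : Finset (Fin n)).filter (fun i => i.val < K)) =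
      (Finset.range K).attachFin (fun a ha => lt_of_lt_of_le (Finset.mem_range.mp ha) h) := by
    ext i
    simp [Finset.mem_attachFin]
  rw [this, Finset.card_attachFin, Finset.card_range]

lemma cnt_sum {α β : Type*} [Fintype α] [Fintype β] (P : α ⊕ β → Prop) :
    cnt P = cnt (fun a => P (Sum.inl a)) + cnt (fun b => P (Sum.inr b)) := by
  unfold cnt
  rw [Finset.card_filter, Finset.card_filter, Finset.card_filter, Fintype.sum_sum_type]

lemma cnt_prod {α β : Type*} [Fintype α] [Fintype β] (P : α × β → Prop) :
    cnt P = ∑ a : α, cnt (fun b => P (a, b)) := by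
  unfold cnt
  rw [Finset.card_filter, Fintype.sum_prod_type]
  exact Finset.sum_congr rfl fun a _ => (Finset.card_filter _ _).symm

lemma cnt_sum_prod {α β : Type*} [Fintype α] [Fintype β] (P : (α ⊕ β) × (α ⊕ β) → Prop) :
    cnt P = cnt (fun p : α × α => P (Sum.inl p.1, Sum.inl p.2)) +
      cnt (fun p : α × β => P (Sum.inl p.1, Sum.inr p.2)) +
      cnt (fun p : β × α => P (Sum.inr p.1, Sum.inl p.2)) +
      cnt (fun p : β × β => P (Sum.inr p.1, Sum.inr p.2)) := by
  unfold cnt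
  rw [Finset.card_filter, Finset.card_filter, Finset.card_filter, Finset.card_filter,
    Finset.card_filter, Fintype.sum_prod_type, Fintype.sum_sum_type]
  simp_rw [Fintype.sum_sum_type, Fintype.sum_prod_type]
  rw [Finset.sum_add_distrib]
  ring_nf
  rw [Finset.sum_add_distrib]
  ring

lemma cnt_copy {ι γ : Type*} [Fintype ι] [Fintype γ] (P : ι → γ × γ → Prop) :
    cnt (fun p : (ι × γ) × (ι × γ) => p.1.1 = p.2.1 ∧ P p.1.1 (p.1.2, p.2.2)) =
      ∑ i : ι, cnt (P i) := by
  simp only [cnt_eq_card]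
  rw [Finset.card_filter, Fintype.sum_prod_type]
  simp_rw [Fintype.sum_prod_type]
  have step : ∀ (i : ι) (x : γ),
      (∑ j : ι, ∑ y : γ, if i = j ∧ P i (x, y) then (1:ℕ) else 0) =
      ∑ y : γ, if P i (x, y) then (1:ℕ) else 0 := by
    intro i x
    rw [Finset.sum_comm]
    refine Finset.sum_congr rfl fun y _ => ?_
    simp_rw [ite_and]
    rw [Finset.sum_ite_eq]
    simp
  calc ∑ i : ι, ∑ x : γ, ∑ j : ι, ∑ y : γ,
        (if (i, x).1 = (j, y).1 ∧ P (i,x).1 ((i,x).2, (j,y).2) then (1:ℕ) else 0)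
      = ∑ i : ι, ∑ x : γ, ∑ y : γ, if P i (x, y) then (1:ℕ) else 0 := by
        refine Finset.sum_congr rfl fun i _ => Finset.sum_congr rfl fun x _ => ?_
        exact step i x
    _ = ∑ i : ι, ((univ : Finset (γ × γ)).filter (P i)).card := by
        refine Finset.sum_congr rfl fun i _ => ?_
        rw [Finset.card_filter, Fintype.sum_prod_type]

lemma cnt_fst_eq {α γ : Type*} [Fintype α] [Fintype γ] (g : γ → α) (Q : γ → Prop) :
    cnt (fun p : α × γ => p.1 = g p.2 ∧ Q p.2) = cnt Q := by
  simp only [cnt_eq_card]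
  rw [Finset.card_filter, Fintype.sum_prod_type, Finset.sum_comm, Finset.card_filter]
  refine Finset.sum_congr rfl fun c _ => ?_
  simp_rw [ite_and]
  rw [Finset.sum_ite_eq']
  simp

lemma cnt_snd_eq {α γ : Type*} [Fintype α] [Fintype γ] (g : γ → α) (Q : γ → Prop) :
    cnt (fun p : γ × α => p.2 = g p.1 ∧ Q p.1) = cnt Q := by
  simp only [cnt_eq_card]
  rw [Finset.card_filter, Fintype.sum_prod_type, Finset.card_filter]
  refine Finset.sum_congr rfl fun c _ => ?_
  simp_rw [ite_and]
  rw [Finset.sum_ite_eq']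
  simp

lemma two_mul_card_edges {V : Type*} [Fintype V] (H : SimpleGraph V) :
    2 * H.edgeFinset.card = cnt (fun p : V × V => H.Adj p.1 p.2) := by
  classical
  rw [← H.sum_degrees_eq_twice_card_edges, cnt_prod]
  refine Finset.sum_congr rfl fun v _ => ?_
  rw [SimpleGraph.degree, cnt_eq_card]
  congr 1
  ext w
  simp

lemma sum_piecewise_fin (n q : ℕ) (hq : q < n) (a b : ℕ) :
    (∑ i : Fin n, (if i.val < q then a else if i.val = q then b else 0)) = q * a + b := by
  have hsplit : ∀ i : Fin n, (if i.val < q then a else if i.val = q then b else 0) =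
      (if i.val < q then a else 0) + (if i = (⟨q, hq⟩ : Fin n) then b else 0) := by
    intro i
    rcases lt_trichotomy i.val q with h | h | h
    · simp [h, Fin.ext_iff, Nat.ne_of_lt h]
    · simp only [h, Fin.ext_iff, Nat.lt_irrefl, if_false, if_true, lt_self_iff_false]
      simp
    · have h1 : ¬ i.val < q := by omega
      have h2 : ¬ i.val = q := by omega
      simp [h1, h2, Fin.ext_iff]
  rw [Finset.sum_congr rfl (fun i _ => hsplit i), Finset.sum_add_distrib]
  congr 1
  · rw [Finset.sum_ite, Finset.sum_const, Finset.sum_const, smul_eq_mul, smul_eq_mul,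
      mul_zero, add_zero]
    have h := cnt_val_lt n q (by omega)
    rw [cnt_eq_card] at h
    rw [h]
  · rw [Finset.sum_ite_eq' univ (⟨q, hq⟩ : Fin n) (fun _ => b)]
    simp

-- ordered pairs of path-adjacent vertices with both coordinates ≤ K
lemma succ_pairs (n K : ℕ) (hK : K ≤ n) :
    cnt (fun p : Fin n × Fin n => p.1.val + 1 = p.2.val ∧ p.2.val < K) = K - 1 := by
  rw [cnt_eq_card, ← Finset.card_range (K - 1)]
  refine Finset.card_bij' (fun p _ => p.1.val)
    (fun a ha => (⟨a, by simp only [Finset.mem_range] at ha; omega⟩,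
                  ⟨a + 1, by simp only [Finset.mem_range] at ha; omega⟩)) ?_ ?_ ?_ ?_
  · intro p hp
    simp only [Finset.mem_filter] at hp
    simp only [Finset.mem_range]
    omega
  · intro a ha
    simp only [Finset.mem_range] at ha
    simp only [Finset.mem_filter, Finset.mem_univ, true_and]
    omega
  · intro p hp
    simp only [Finset.mem_filter] at hp
    have : (p.1.val + 1) = p.2.val := hp.2.1
    refine Prod.ext ?_ ?_ <;> apply Fin.ext <;> simp [this]
  · intro a ha
    rfl

lemma succ_pairs' (n K : ℕ) (hK : K ≤ n) :
    cnt (fun p : Fin n × Fin n => p.2.val + 1 = p.1.val ∧ p.1.val < K) = K - 1 := by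
  rw [← succ_pairs n K hK, cnt_eq_card, cnt_eq_card]
  refine Finset.card_nbij' (fun p => (p.2, p.1)) (fun p => (p.2, p.1)) ?_ ?_ ?_ ?_ <;>
    simp [Set.MapsTo, Set.LeftInvOn, Set.RightInvOn, Set.EqOn]

lemma path_pairs (n K : ℕ) (hK : K < n) :
    cnt (fun p : Fin n × Fin n =>
      (pathGraph n).Adj p.1 p.2 ∧ p.1.val ≤ K ∧ p.2.val ≤ K) = 2 * K := by
  have h1 : cnt (fun p : Fin n × Fin n =>
      (pathGraph n).Adj p.1 p.2 ∧ p.1.val ≤ K ∧ p.2.val ≤ K) =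
      cnt (fun p : Fin n × Fin n =>
        (p.1.val + 1 = p.2.val ∧ p.2.val < K + 1) ∨ (p.2.val + 1 = p.1.val ∧ p.1.val < K + 1)) := by
    refine cnt_congr fun p => ?_
    rw [pathGraph_adj]
    omega
  rw [h1, cnt_eq_card]
  rw [Finset.filter_or, Finset.card_union_of_disjoint]
  · have h2 := succ_pairs n (K+1) (by omega)
    have h3 := succ_pairs' n (K+1) (by omega)
    rw [cnt_eq_card] at h2 h3
    rw [h2, h3]
    omega
  · rw [Finset.disjoint_filter]
    intro p _ h1 h2
    omega


lemma cycle_adj_val {m : ℕ} (hm : 4 ≤ m) (x y : Fin m) :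
    (cycleGraph m).Adj x y ↔ ((x.val + 1) % m = y.val ∨ (y.val + 1) % m = x.val) := by
  obtain ⟨m', rfl⟩ : ∃ m', m = m' + 2 := ⟨m - 2, by omega⟩
  rw [cycleGraph_adj]
  have h1 : ∀ u v : Fin (m' + 2), u - v = 1 ↔ (v.val + 1) % (m' + 2) = u.val := by
    intro u v
    rw [sub_eq_iff_eq_add, Fin.ext_iff, Fin.add_def]
    simp [Nat.add_comm]
    exact eq_comm
  rw [h1, h1]
  tauto

lemma cycle_succ_card (m : ℕ) (hm : 4 ≤ m) :
    cnt (fun p : Fin m × Fin m => (p.1.val + 1) % m = p.2.val) = m := by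
  rw [cnt_eq_card]
  have key : ((univ : Finset (Fin m × Fin m)).filter
      (fun p => (p.1.val + 1) % m = p.2.val)).card = (univ : Finset (Fin m)).card := by
    refine Finset.card_bij' (fun p _ => p.1)
      (fun x _ => (x, ⟨(x.val + 1) % m, Nat.mod_lt _ (by omega)⟩)) ?_ ?_ ?_ ?_
    · intro p hp
      exact Finset.mem_univ _
    · intro x _
      simp
    · intro p hp
      simp only [Finset.mem_filter] at hp
      refine Prod.ext rfl (Fin.ext ?_)
      simp [hp.2]
    · intro x _
      rfl
  simpa using key

lemma cycle_succ_card' (m : ℕ) (hm : 4 ≤ m) :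
    cnt (fun p : Fin m × Fin m => (p.2.val + 1) % m = p.1.val) = m := by
  have h := cycle_succ_card m hm
  rw [cnt_eq_card] at h
  rw [cnt_eq_card]
  refine Eq.trans ?_ h
  refine Finset.card_nbij' (fun p => (p.2, p.1)) (fun p => (p.2, p.1)) ?_ ?_ ?_ ?_ <;>
    simp [Set.MapsTo, Set.LeftInvOn, Set.RightInvOn, Set.EqOn]

lemma cycle_not_both {m : ℕ} (hm : 4 ≤ m) (x y : Fin m)
    (h1 : (x.val + 1) % m = y.val) (h2 : (y.val + 1) % m = x.val) : False := by
  rcases Nat.lt_or_ge (x.val + 1) m with h | h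
  · rw [Nat.mod_eq_of_lt h] at h1
    rcases Nat.lt_or_ge (y.val + 1) m with h' | h'
    · rw [Nat.mod_eq_of_lt h'] at h2
      omega
    · have : y.val = m - 1 := by have := y.isLt; omega
      rw [this, Nat.sub_add_cancel (by omega : 1 ≤ m), Nat.mod_self] at h2
      omega
  · have hx : x.val = m - 1 := by have := x.isLt; omega
    rw [hx, Nat.sub_add_cancel (by omega : 1 ≤ m), Nat.mod_self] at h1
    rw [← h1, Nat.mod_eq_of_lt (by omega)] at h2
    omega

lemma cycle_pairs (m : ℕ) (hm : 4 ≤ m) :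
    cnt (fun p : Fin m × Fin m => (cycleGraph m).Adj p.1 p.2) = 2 * m := by
  rw [cnt_congr (p := fun p : Fin m × Fin m => (cycleGraph m).Adj p.1 p.2)
    (q := fun p : Fin m × Fin m => ((p.1.val + 1) % m = p.2.val ∨ (p.2.val + 1) % m = p.1.val))
    (fun p => cycle_adj_val hm p.1 p.2), cnt_eq_card]
  rw [Finset.filter_or, Finset.card_union_of_disjoint]
  · have h2 := cycle_succ_card m hm
    have h3 := cycle_succ_card' m hm
    rw [cnt_eq_card] at h2 h3
    rw [h2, h3]
    omega
  · rw [Finset.disjoint_filter]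
    rintro ⟨x, y⟩ _ h1 h2
    exact cycle_not_both hm x y h1 h2

lemma cycle_pairs_lt (m K : ℕ) (hm : 4 ≤ m) (hK : K ≤ m - 1) :
    cnt (fun p : Fin m × Fin m =>
      (cycleGraph m).Adj p.1 p.2 ∧ p.1.val < K ∧ p.2.val < K) = 2 * (K - 1) := by
  have hiff : ∀ p : Fin m × Fin m,
      ((cycleGraph m).Adj p.1 p.2 ∧ p.1.val < K ∧ p.2.val < K) ↔
      ((p.1.val + 1 = p.2.val ∧ p.2.val < K) ∨ (p.2.val + 1 = p.1.val ∧ p.1.val < K)) := by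
    rintro ⟨x, y⟩
    rw [cycle_adj_val hm]
    simp only
    constructor
    · rintro ⟨h1 | h1, hx, hy⟩
      · left
        rw [Nat.mod_eq_of_lt (by omega)] at h1
        exact ⟨h1, hy⟩
      · right
        rw [Nat.mod_eq_of_lt (by omega)] at h1
        exact ⟨h1, hx⟩
    · rintro (⟨h1, h2⟩ | ⟨h1, h2⟩)
      · exact ⟨Or.inl (by rw [Nat.mod_eq_of_lt (by omega)]; exact h1), by omega, h2⟩
      · exact ⟨Or.inr (by rw [Nat.mod_eq_of_lt (by omega)]; exact h1), h2, by omega⟩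
  rw [cnt_congr (p := fun p : Fin m × Fin m => ((cycleGraph m).Adj p.1 p.2 ∧ p.1.val < K ∧ p.2.val < K))
    (q := fun p : Fin m × Fin m => ((p.1.val + 1 = p.2.val ∧ p.2.val < K) ∨ (p.2.val + 1 = p.1.val ∧ p.1.val < K)))
    hiff, cnt_eq_card]
  rw [Finset.filter_or, Finset.card_union_of_disjoint]
  · have h2 := succ_pairs m K (by omega)
    have h3 := succ_pairs' m K (by omega)
    rw [cnt_eq_card] at h2 h3
    rw [h2, h3]
    omega
  · rw [Finset.disjoint_filter]
    rintro ⟨x, y⟩ _ h1 h2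
    simp only at h1 h2
    omega

lemma spoke_count (n m q r : ℕ) (hq : q < n) (hr : r ≤ m) :
    cnt (fun w : Fin n × Fin m => w.1.val < q ∨ (w.1.val = q ∧ w.2.val < r)) = q * m + r := by
  rw [cnt_prod (fun w : Fin n × Fin m => w.1.val < q ∨ (w.1.val = q ∧ w.2.val < r))]
  have inner : ∀ i : Fin n,
      cnt (fun x : Fin m => i.val < q ∨ (i.val = q ∧ x.val < r)) =
      if i.val < q then m else if i.val = q then r else 0 := by
    intro i
    rcases lt_trichotomy i.val q with h | h | h
    · rw [if_pos h]
      rw [cnt_congr (p := fun x : Fin m => i.val < q ∨ (i.val = q ∧ x.val < r)) (q := fun _ => True) (fun x => by simp [h]), cnt_true]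
      simp
    · rw [if_neg (by omega), if_pos h]
      rw [cnt_congr (p := fun x : Fin m => i.val < q ∨ (i.val = q ∧ x.val < r)) (q := fun x : Fin m => x.val < r) (fun x => by
        constructor
        · rintro (h' | h')
          · omega
          · exact h'.2
        · intro h'
          exact Or.inr ⟨h, h'⟩)]
      exact cnt_val_lt m r hr
    · rw [if_neg (by omega), if_neg (by omega)]
      rw [cnt_congr (p := fun x : Fin m => i.val < q ∨ (i.val = q ∧ x.val < r)) (q := fun _ => False) (fun x => by
        constructor
        · rintro (h' | h')
          · omega
          · omega
        · intro h'
          exact absurd h' not_false), cnt_false]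
  rw [Finset.sum_congr rfl (fun i _ => inner i)]
  exact sum_piecewise_fin n q hq m r


lemma corona_adj_ll {α β : Type*} (G : SimpleGraph α) (H : SimpleGraph β) (u v : α) :
    (corona G H).Adj (Sum.inl u) (Sum.inl v) ↔ G.Adj u v := Iff.rfl

lemma corona_adj_lr {α β : Type*} (G : SimpleGraph α) (H : SimpleGraph β) (u : α) (w : α × β) :
    (corona G H).Adj (Sum.inl u) (Sum.inr w) ↔ u = w.1 := Iff.rfl

lemma corona_adj_rl {α β : Type*} (G : SimpleGraph α) (H : SimpleGraph β) (u : α) (w : α × β) :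
    (corona G H).Adj (Sum.inr w) (Sum.inl u) ↔ u = w.1 := Iff.rfl

lemma corona_adj_rr {α β : Type*} (G : SimpleGraph α) (H : SimpleGraph β) (w w' : α × β) :
    (corona G H).Adj (Sum.inr w) (Sum.inr w') ↔ w.1 = w'.1 ∧ H.Adj w.2 w'.2 := Iff.rfl

def lab (q r : ℕ) {n m : ℕ} : (Fin n ⊕ Fin n × Fin m) → (Fin n ⊕ Fin n × Fin m) → ℕ
  | Sum.inl i, Sum.inl j => if i.val ≤ q ∧ j.val ≤ q then 0 else 1
  | Sum.inl _, Sum.inr w => if w.1.val < q ∨ (w.1.val = q ∧ w.2.val < r) then 0 else 1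
  | Sum.inr w, Sum.inl _ => if w.1.val < q ∨ (w.1.val = q ∧ w.2.val < r) then 0 else 1
  | Sum.inr w, Sum.inr w' =>
      if min w.1.val w'.1.val < q then 0
      else if w.1.val = q ∧ w'.1.val = q ∧ w.2.val < r ∧ w'.2.val < r then 0 else 1

lemma lab_symm (q r : ℕ) {n m : ℕ} (u v : Fin n ⊕ Fin n × Fin m) :
    lab q r u v = lab q r v u := by
  rcases u with i | w <;> rcases v with j | w' <;> simp only [lab]
  · exact if_congr (by tauto) rfl rfl
  · rw [Nat.min_comm]
    exact if_congr Iff.rfl rfl (if_congr (by tauto) rfl rfl)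

lemma lab_01 (q r : ℕ) {n m : ℕ} (u v : Fin n ⊕ Fin n × Fin m) :
    lab q r u v = 0 ∨ lab q r u v = 1 := by
  rcases u with i | w <;> rcases v with j | w' <;> simp only [lab] <;> split_ifs <;> simp

noncomputable def flab (q r : ℕ) {n m : ℕ} : Sym2 (Fin n ⊕ Fin n × Fin m) → ℕ :=
  Sym2.lift ⟨fun u v => lab q r u v, fun u v => lab_symm q r u v⟩

lemma flab_mk (q r : ℕ) {n m : ℕ} (u v : Fin n ⊕ Fin n × Fin m) :
    flab q r s(u, v) = lab q r u v := rfl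

lemma flab_01 (q r : ℕ) {n m : ℕ} (e : Sym2 (Fin n ⊕ Fin n × Fin m)) :
    flab q r e = 0 ∨ flab q r e = 1 := by
  induction e with
  | _ u v => exact lab_01 q r u v

def Gz (q r n m : ℕ) : SimpleGraph (Fin n ⊕ Fin n × Fin m) where
  Adj u v := (corona (pathGraph n) (cycleGraph m)).Adj u v ∧ lab q r u v = 0
  symm := ⟨by
    intro u v h
    exact ⟨h.1.symm, (lab_symm q r u v) ▸ h.2⟩⟩
  loopless := ⟨by
    intro u h
    exact (corona (pathGraph n) (cycleGraph m)).irrefl h.1⟩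

lemma Gz_edgeFinset (q r n m : ℕ) :
    (Gz q r n m).edgeFinset =
      (corona (pathGraph n) (cycleGraph m)).edgeFinset.filter (fun e => flab q r e = 0) := by
  ext e
  induction e with
  | _ u v =>
    simp only [Finset.mem_filter, SimpleGraph.mem_edgeFinset, SimpleGraph.mem_edgeSet]
    rfl

lemma ite01_eq_zero (c : Prop) [Decidable c] : ((if c then (0:ℕ) else 1) = 0) ↔ c := by
  split_ifs with h <;> simp [h]

lemma ite_ite01_eq_zero (c d : Prop) [Decidable c] [Decidable d] :
    ((if c then (0:ℕ) else if d then 0 else 1) = 0) ↔ c ∨ d := by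
  split_ifs with h h' <;> simp_all

def Zpred (q r : ℕ) {n m : ℕ} : (Fin n ⊕ Fin n × Fin m) → Prop
  | Sum.inl i => i.val ≤ q
  | Sum.inr w => w.1.val < q ∨ (w.1.val = q ∧ w.2.val < r)

lemma label_one (q r : ℕ) {n m : ℕ} (v : Fin n ⊕ Fin n × Fin m)
    (hnZ : ¬ Zpred q r v) :
    (∏ u ∈ Finset.univ.filter
        (fun u => (corona (pathGraph n) (cycleGraph m)).Adj v u), flab q r s(v, u)) = 1 := by
  apply Finset.prod_eq_one
  intro u hu
  rw [Finset.mem_filter] at hu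
  have hadj := hu.2
  rcases v with i | w
  · simp only [Zpred] at hnZ
    rcases u with j | w'
    · rw [flab_mk]
      simp only [lab]
      rw [if_neg (by omega)]
    · have hij : i = w'.1 := (corona_adj_lr _ _ _ _).mp hadj
      subst hij
      rw [flab_mk]
      simp only [lab]
      rw [if_neg (by omega)]
  · simp only [Zpred] at hnZ
    rcases u with j | w'
    · have hij : j = w.1 := (corona_adj_rl _ _ _ _).mp hadj
      rw [flab_mk]
      simp only [lab]
      rw [if_neg hnZ]
    · have h2 := (corona_adj_rr _ _ _ _).mp hadj
      have hval : w.1.val = w'.1.val := congrArg Fin.val h2.1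
      rw [flab_mk]
      simp only [lab]
      rw [if_neg (by omega), if_neg (by omega)]

lemma label_zero (q r : ℕ) {n m : ℕ} (hr : 1 ≤ r) (hm : 0 < m) (v : Fin n ⊕ Fin n × Fin m)
    (hZ : Zpred q r v) :
    (∏ u ∈ Finset.univ.filter
        (fun u => (corona (pathGraph n) (cycleGraph m)).Adj v u), flab q r s(v, u)) = 0 := by
  rcases v with i | w
  · simp only [Zpred] at hZ
    apply Finset.prod_eq_zero (i := (Sum.inr (i, ⟨0, hm⟩) : Fin n ⊕ Fin n × Fin m))
    · rw [Finset.mem_filter]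
      exact ⟨Finset.mem_univ _, (corona_adj_lr _ _ _ _).mpr rfl⟩
    · rw [flab_mk]
      simp only [lab]
      rw [if_pos]
      rcases Nat.lt_or_ge i.val q with h | h
      · exact Or.inl h
      · exact Or.inr ⟨by omega, hr⟩
  · simp only [Zpred] at hZ
    apply Finset.prod_eq_zero (i := (Sum.inl w.1 : Fin n ⊕ Fin n × Fin m))
    · rw [Finset.mem_filter]
      exact ⟨Finset.mem_univ _, (corona_adj_rl _ _ _ _).mpr rfl⟩
    · rw [flab_mk]
      simp only [lab]
      rw [if_pos hZ]


lemma pairs_G (n m : ℕ) (hn : 1 ≤ n) (hm4 : 4 ≤ m) :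
    cnt (fun p : (Fin n ⊕ Fin n × Fin m) × (Fin n ⊕ Fin n × Fin m) =>
        (corona (pathGraph n) (cycleGraph m)).Adj p.1 p.2) =
      2 * (n - 1) + (n * m + (n * m + n * (2 * m))) := by
  rw [cnt_sum_prod (P := fun p : (Fin n ⊕ Fin n × Fin m) × (Fin n ⊕ Fin n × Fin m) =>
    (corona (pathGraph n) (cycleGraph m)).Adj p.1 p.2)]
  have p1 : cnt (fun p : Fin n × Fin n =>
      (corona (pathGraph n) (cycleGraph m)).Adj (Sum.inl p.1) (Sum.inl p.2)) = 2 * (n - 1) := by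
    rw [cnt_congr (q := fun p : Fin n × Fin n =>
        (pathGraph n).Adj p.1 p.2 ∧ p.1.val ≤ n - 1 ∧ p.2.val ≤ n - 1) (fun p => by
      rw [corona_adj_ll]
      have h1 := p.1.isLt
      have h2 := p.2.isLt
      constructor
      · intro h
        exact ⟨h, by omega, by omega⟩
      · intro h
        exact h.1)]
    exact path_pairs n (n - 1) (by omega)
  have p2 : cnt (fun p : Fin n × (Fin n × Fin m) =>
      (corona (pathGraph n) (cycleGraph m)).Adj (Sum.inl p.1) (Sum.inr p.2)) = n * m := by
    rw [cnt_congr (q := fun p : Fin n × (Fin n × Fin m) => p.1 = p.2.1 ∧ True) (fun p => by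
      rw [corona_adj_lr]
      simp)]
    rw [cnt_fst_eq Prod.fst (fun _ => True), cnt_true]
    simp
  have p3 : cnt (fun p : (Fin n × Fin m) × Fin n =>
      (corona (pathGraph n) (cycleGraph m)).Adj (Sum.inr p.1) (Sum.inl p.2)) = n * m := by
    rw [cnt_congr (q := fun p : (Fin n × Fin m) × Fin n => p.2 = p.1.1 ∧ True) (fun p => by
      rw [corona_adj_rl]
      simp)]
    rw [cnt_snd_eq Prod.fst (fun _ => True), cnt_true]
    simp
  have p4 : cnt (fun p : (Fin n × Fin m) × (Fin n × Fin m) =>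
      (corona (pathGraph n) (cycleGraph m)).Adj (Sum.inr p.1) (Sum.inr p.2)) = n * (2 * m) := by
    rw [cnt_congr (q := fun p : (Fin n × Fin m) × (Fin n × Fin m) =>
        p.1.1 = p.2.1 ∧ (fun _ : Fin n => fun z : Fin m × Fin m =>
          (cycleGraph m).Adj z.1 z.2) p.1.1 (p.1.2, p.2.2)) (fun p => by
      rw [corona_adj_rr])]
    rw [cnt_copy (fun _ : Fin n => fun z : Fin m × Fin m => (cycleGraph m).Adj z.1 z.2)]
    rw [Finset.sum_congr rfl (fun i _ => cycle_pairs m hm4)]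
    simp [Finset.sum_const, mul_comm]
  rw [p1, p2, p3, p4]
  omega

lemma pairs_Gz (q r n m : ℕ) (hq : q < n) (hr1 : 2 ≤ r) (hmr : m = 2 * r) :
    cnt (fun p : (Fin n ⊕ Fin n × Fin m) × (Fin n ⊕ Fin n × Fin m) =>
        (Gz q r n m).Adj p.1 p.2) =
      2 * q + ((q * m + r) + ((q * m + r) + (q * (2 * m) + 2 * (r - 1)))) := by
  have hm4 : 4 ≤ m := by omega
  rw [cnt_sum_prod (P := fun p : (Fin n ⊕ Fin n × Fin m) × (Fin n ⊕ Fin n × Fin m) =>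
    (Gz q r n m).Adj p.1 p.2)]
  have p1 : cnt (fun p : Fin n × Fin n => (Gz q r n m).Adj (Sum.inl p.1) (Sum.inl p.2)) =
      2 * q := by
    rw [cnt_congr (q := fun p : Fin n × Fin n =>
        (pathGraph n).Adj p.1 p.2 ∧ p.1.val ≤ q ∧ p.2.val ≤ q) (fun p => by
      show ((corona (pathGraph n) (cycleGraph m)).Adj (Sum.inl p.1) (Sum.inl p.2) ∧
        lab q r (Sum.inl p.1) (Sum.inl p.2) = 0) ↔ _
      rw [corona_adj_ll]
      simp only [lab]
      rw [ite01_eq_zero])]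
    exact path_pairs n q hq
  have p2 : cnt (fun p : Fin n × (Fin n × Fin m) =>
      (Gz q r n m).Adj (Sum.inl p.1) (Sum.inr p.2)) = q * m + r := by
    rw [cnt_congr (q := fun p : Fin n × (Fin n × Fin m) => p.1 = p.2.1 ∧
        (p.2.1.val < q ∨ (p.2.1.val = q ∧ p.2.2.val < r))) (fun p => by
      show ((corona (pathGraph n) (cycleGraph m)).Adj (Sum.inl p.1) (Sum.inr p.2) ∧
        lab q r (Sum.inl p.1) (Sum.inr p.2) = 0) ↔ _
      rw [corona_adj_lr]
      simp only [lab]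
      rw [ite01_eq_zero])]
    rw [cnt_fst_eq Prod.fst (fun w : Fin n × Fin m => w.1.val < q ∨ (w.1.val = q ∧ w.2.val < r))]
    exact spoke_count n m q r hq (by omega)
  have p3 : cnt (fun p : (Fin n × Fin m) × Fin n =>
      (Gz q r n m).Adj (Sum.inr p.1) (Sum.inl p.2)) = q * m + r := by
    rw [cnt_congr (q := fun p : (Fin n × Fin m) × Fin n => p.2 = p.1.1 ∧
        (p.1.1.val < q ∨ (p.1.1.val = q ∧ p.1.2.val < r))) (fun p => by
      show ((corona (pathGraph n) (cycleGraph m)).Adj (Sum.inr p.1) (Sum.inl p.2) ∧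
        lab q r (Sum.inr p.1) (Sum.inl p.2) = 0) ↔ _
      rw [corona_adj_rl]
      simp only [lab]
      rw [ite01_eq_zero])]
    rw [cnt_snd_eq Prod.fst (fun w : Fin n × Fin m => w.1.val < q ∨ (w.1.val = q ∧ w.2.val < r))]
    exact spoke_count n m q r hq (by omega)
  have p4 : cnt (fun p : (Fin n × Fin m) × (Fin n × Fin m) =>
      (Gz q r n m).Adj (Sum.inr p.1) (Sum.inr p.2)) = q * (2 * m) + 2 * (r - 1) := by
    rw [cnt_congr (q := fun p : (Fin n × Fin m) × (Fin n × Fin m) =>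
        p.1.1 = p.2.1 ∧ (fun i : Fin n => fun z : Fin m × Fin m =>
          (cycleGraph m).Adj z.1 z.2 ∧
            (i.val < q ∨ (i.val = q ∧ z.1.val < r ∧ z.2.val < r))) p.1.1 (p.1.2, p.2.2))
        (fun p => by
      show ((corona (pathGraph n) (cycleGraph m)).Adj (Sum.inr p.1) (Sum.inr p.2) ∧
        lab q r (Sum.inr p.1) (Sum.inr p.2) = 0) ↔ _
      rw [corona_adj_rr]
      simp only [lab]
      rw [ite_ite01_eq_zero]
      constructor
      · rintro ⟨⟨hij, hcyc⟩, hc⟩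
        have hval : p.1.1.val = p.2.1.val := congrArg Fin.val hij
        exact ⟨hij, hcyc, by omega⟩
      · rintro ⟨hij, hcyc, hc⟩
        have hval : p.1.1.val = p.2.1.val := congrArg Fin.val hij
        exact ⟨⟨hij, hcyc⟩, by omega⟩)]
    rw [cnt_copy (fun i : Fin n => fun z : Fin m × Fin m =>
      (cycleGraph m).Adj z.1 z.2 ∧ (i.val < q ∨ (i.val = q ∧ z.1.val < r ∧ z.2.val < r)))]
    have inner : ∀ i : Fin n,
        cnt (fun z : Fin m × Fin m => (cycleGraph m).Adj z.1 z.2 ∧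
          (i.val < q ∨ (i.val = q ∧ z.1.val < r ∧ z.2.val < r))) =
        if i.val < q then 2 * m else if i.val = q then 2 * (r - 1) else 0 := by
      intro i
      rcases lt_trichotomy i.val q with h | h | h
      · rw [if_pos h]
        rw [cnt_congr (q := fun z : Fin m × Fin m => (cycleGraph m).Adj z.1 z.2) (fun z => by
          constructor
          · exact fun hh => hh.1
          · exact fun hh => ⟨hh, Or.inl h⟩)]
        exact cycle_pairs m hm4
      · rw [if_neg (by omega), if_pos h]
        rw [cnt_congr (q := fun z : Fin m × Fin m =>
            (cycleGraph m).Adj z.1 z.2 ∧ z.1.val < r ∧ z.2.val < r) (fun z => by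
          constructor
          · rintro ⟨hcyc, hc | hc⟩
            · omega
            · exact ⟨hcyc, hc.2⟩
          · rintro ⟨hcyc, hc⟩
            exact ⟨hcyc, Or.inr ⟨h, hc⟩⟩)]
        exact cycle_pairs_lt m r hm4 (by omega)
      · rw [if_neg (by omega), if_neg (by omega)]
        rw [cnt_congr (q := fun _ : Fin m × Fin m => False) (fun z => by
          constructor
          · rintro ⟨hcyc, hc | hc⟩ <;> omega
          · exact fun hh => absurd hh not_false)]
        exact cnt_false
    rw [Finset.sum_congr rfl (fun i _ => inner i)]
    exact sum_piecewise_fin n q hq (2 * m) (2 * (r - 1))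
  rw [p1, p2, p3, p4]
  omega


/-- For odd `n ≥ 3` and even `m ≥ 4`, the corona graph `P_n ∘ C_m` admits an
edge labeling with `e_f(0) = (2nm + n - 3)/2`, `e_f(1) = (2nm + n + 1)/2`,
`v_f(0) = (n + nm + 1)/2`, `v_f(1) = (n + nm - 1)/2`; in particular it is total edge
product cordial. -/
theorem corona_path_cycle_odd_even_counts (n m : ℕ) (hn : 3 ≤ n) (hno : Odd n)
    (hm : 4 ≤ m) (hme : Even m) :
    ∃ f : Sym2 (Fin n ⊕ Fin n × Fin m) → ℕ,
      (∀ e ∈ (corona (pathGraph n) (cycleGraph m)).edgeSet, f e = 0 ∨ f e = 1) ∧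
      eCount (corona (pathGraph n) (cycleGraph m)) f 0 = (2 * n * m + n - 3) / 2 ∧
      eCount (corona (pathGraph n) (cycleGraph m)) f 1 = (2 * n * m + n + 1) / 2 ∧
      vCount (corona (pathGraph n) (cycleGraph m)) f 0 = (n + n * m + 1) / 2 ∧
      vCount (corona (pathGraph n) (cycleGraph m)) f 1 = (n + n * m - 1) / 2 ∧
      |((vCount (corona (pathGraph n) (cycleGraph m)) f 0 : ℤ) +
          (eCount (corona (pathGraph n) (cycleGraph m)) f 0 : ℤ)) -
        ((vCount (corona (pathGraph n) (cycleGraph m)) f 1 : ℤ) +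
          (eCount (corona (pathGraph n) (cycleGraph m)) f 1 : ℤ))| ≤ 1 := by
  obtain ⟨q, hq⟩ := hno
  obtain ⟨r, hr⟩ := hme
  have hq1 : 1 ≤ q := by omega
  have hr2 : 2 ≤ r := by omega
  have hqn : q < n := by omega
  have hm4 : 4 ≤ m := hm
  obtain ⟨t, ht⟩ : ∃ t, q * r = t := ⟨_, rfl⟩
  have hp1 : q * m = 2 * t := by rw [hr, ← ht]; ring
  have hp3 : 2 * n * m = 8 * t + 4 * r := by rw [hq, hr, ← ht]; ring
  have hp4 : q * (2 * m) = 4 * t := by rw [hr, ← ht]; ring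
  have hp2 : n * m = 4 * t + 2 * r := by rw [hq, hr, ← ht]; ring
  have hp5 : n * (2 * m) = 8 * t + 4 * r := by rw [hq, hr, ← ht]; ring
  -- edge counts
  have h2e0 : 2 * eCount (corona (pathGraph n) (cycleGraph m)) (flab q r) 0 =
      2 * q + ((q * m + r) + ((q * m + r) + (q * (2 * m) + 2 * (r - 1)))) := by
    have h1 : eCount (corona (pathGraph n) (cycleGraph m)) (flab q r) 0 =
        (Gz q r n m).edgeFinset.card :=
      (congrArg Finset.card (Gz_edgeFinset q r n m)).symm
    rw [h1, two_mul_card_edges (Gz q r n m), pairs_Gz q r n m hqn hr2 (by omega)]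
  have h2E : 2 * (corona (pathGraph n) (cycleGraph m)).edgeFinset.card =
      2 * (n - 1) + (n * m + (n * m + n * (2 * m))) := by
    rw [two_mul_card_edges, pairs_G n m (by omega) hm4]
  have hsplitE : eCount (corona (pathGraph n) (cycleGraph m)) (flab q r) 0 +
      eCount (corona (pathGraph n) (cycleGraph m)) (flab q r) 1 =
      (corona (pathGraph n) (cycleGraph m)).edgeFinset.card := by
    show ((corona (pathGraph n) (cycleGraph m)).edgeFinset.filter
        (fun e => flab q r e = 0)).card +
      ((corona (pathGraph n) (cycleGraph m)).edgeFinset.filter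
        (fun e => flab q r e = 1)).card = _
    have hfil : ((corona (pathGraph n) (cycleGraph m)).edgeFinset.filter
        (fun e => flab q r e = 1)) =
        ((corona (pathGraph n) (cycleGraph m)).edgeFinset.filter
        (fun e => ¬ flab q r e = 0)) :=
      Finset.filter_congr (fun e _ => by
        have h01 := flab_01 q r e
        constructor <;> intro <;> omega)
    rw [hfil]
    exact Finset.card_filter_add_card_filter_not _
  -- vertex counts
  have hiffZ : ∀ v : Fin n ⊕ Fin n × Fin m,
      inducedLabel (corona (pathGraph n) (cycleGraph m)) (flab q r) v = 0 ↔ Zpred q r v := by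
    intro v
    constructor
    · intro h0
      by_contra hnZ
      have h1 : inducedLabel (corona (pathGraph n) (cycleGraph m)) (flab q r) v = 1 :=
        label_one q r v hnZ
      omega
    · intro hZ
      exact label_zero q r (by omega) (by omega) v hZ
  have hv0 : vCount (corona (pathGraph n) (cycleGraph m)) (flab q r) 0 =
      (q + 1) + (q * m + r) := by
    show ((univ : Finset (Fin n ⊕ Fin n × Fin m)).filter
        (fun v => inducedLabel (corona (pathGraph n) (cycleGraph m)) (flab q r) v = 0)).card = _
    rw [← cnt_eq_card]
    rw [cnt_congr (q := Zpred q r) hiffZ]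
    rw [cnt_sum (Zpred q r)]
    congr 1
    · rw [cnt_congr (p := fun i : Fin n => Zpred q r (Sum.inl i))
        (q := fun i : Fin n => i.val < q + 1) (fun i => by simp only [Zpred]; omega)]
      exact cnt_val_lt n (q + 1) (by omega)
    · exact spoke_count n m q r hqn (by omega)
  have hVsplit : vCount (corona (pathGraph n) (cycleGraph m)) (flab q r) 0 +
      vCount (corona (pathGraph n) (cycleGraph m)) (flab q r) 1 = n + n * m := by
    show ((univ : Finset (Fin n ⊕ Fin n × Fin m)).filter
        (fun v => inducedLabel (corona (pathGraph n) (cycleGraph m)) (flab q r) v = 0)).card +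
      ((univ : Finset (Fin n ⊕ Fin n × Fin m)).filter
        (fun v => inducedLabel (corona (pathGraph n) (cycleGraph m)) (flab q r) v = 1)).card = _
    have hfil : ((univ : Finset (Fin n ⊕ Fin n × Fin m)).filter
        (fun v => inducedLabel (corona (pathGraph n) (cycleGraph m)) (flab q r) v = 1)) =
        ((univ : Finset (Fin n ⊕ Fin n × Fin m)).filter
        (fun v => ¬ inducedLabel (corona (pathGraph n) (cycleGraph m)) (flab q r) v = 0)) :=
      Finset.filter_congr (fun v _ => by
        by_cases hZ : Zpred q r v
        · have h0 : inducedLabel (corona (pathGraph n) (cycleGraph m)) (flab q r) v = 0 :=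
            label_zero q r (by omega) (by omega) v hZ
          constructor <;> intro <;> omega
        · have h1 : inducedLabel (corona (pathGraph n) (cycleGraph m)) (flab q r) v = 1 :=
            label_one q r v hZ
          constructor <;> intro <;> omega)
    rw [hfil, Finset.card_filter_add_card_filter_not, Finset.card_univ]
    simp
  -- final values
  rw [hp1, hp4] at h2e0
  rw [hp2, hp5] at h2E
  rw [hp1] at hv0
  rw [hp2] at hVsplit
  obtain ⟨r2, hr2'⟩ : ∃ r2, r = r2 + 2 := ⟨r - 2, by omega⟩
  have he0t : eCount (corona (pathGraph n) (cycleGraph m)) (flab q r) 0 =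
      4 * t + q + 2 * r2 + 3 := by omega
  have he1t : eCount (corona (pathGraph n) (cycleGraph m)) (flab q r) 1 =
      4 * t + q + 2 * r2 + 5 := by omega
  have hv0t : vCount (corona (pathGraph n) (cycleGraph m)) (flab q r) 0 =
      2 * t + q + r2 + 3 := by omega
  have hv1t : vCount (corona (pathGraph n) (cycleGraph m)) (flab q r) 1 =
      2 * t + q + r2 + 2 := by omega
  refine ⟨flab q r, fun e _ => flab_01 q r e, ?_, ?_, ?_, ?_, ?_⟩
  · rw [hp3, he0t]; omega
  · rw [hp3, he1t]; omega
  · rw [hp2, hv0t]; omega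
  · rw [hp2, hv1t]; omega
  · rw [he0t, he1t, hv0t, hv1t, abs_le]
    constructor <;> push_cast <;> omega
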